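/- arXiv:1501.01350 — 2 statements merged into one kernel-verified Lean document; each statement's English description precedes it below -/
import Mathlib

section
/- For every real α with 1 < α < 2 and every integer n ≥ 3, the tail sum of absolute values of the fractional centred difference coefficients satisfies S(α)·(α+2n)^{−(2α+1)}·(α+4)^{2(α+1)}/(2(2α+1)) < Σ_{k=n}^{∞} |g_k^{(α)}| < S(α)·(α+2n)^{−α}·(α+6)^{α+1}/(2α), where S(α) = −Γ(α+1)/(Γ(α/2−1)·Γ(α/2+3)); in particular the series Σ_{k=n}^{∞} |g_k^{(α)}| converges. -/
open Real

/-- The fractional centred difference coefficients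
`g_k^{(α)} = ((−1)^k Γ(α+1)) / (Γ(α/2 − k + 1) Γ(α/2 + k + 1))`. -/
noncomputable def fracCoeff (α : ℝ) (k : ℤ) : ℝ :=
  ((-1 : ℝ) ^ k * Real.Gamma (α + 1)) /
    (Real.Gamma (α / 2 - (k : ℝ) + 1) * Real.Gamma (α / 2 + (k : ℝ) + 1))

/-- `S(α) = −Γ(α+1)/(Γ(α/2−1)·Γ(α/2+3))`. -/
noncomputable def Scoeff (α : ℝ) : ℝ :=
  -Real.Gamma (α + 1) / (Real.Gamma (α / 2 - 1) * Real.Gamma (α / 2 + 3))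



lemma neg_one_zpow_mul_self (k : ℤ) : ((-1:ℝ)^k) * ((-1:ℝ)^k) = 1 := by
  rcases Int.even_or_odd k with h | h
  · rw [h.neg_one_zpow]; norm_num
  · rw [Odd.neg_one_zpow h]; norm_num

lemma fracCoeff_eq (α : ℝ) (hα1 : 1 < α) (hα2 : α < 2) (k : ℤ) (hk : 2 ≤ k) :
    fracCoeff α k = -(Real.Gamma (α + 1) * Real.sin (π * (α / 2)) / π) *
      (Real.Gamma ((k : ℝ) - α / 2) / Real.Gamma ((k : ℝ) + α / 2 + 1)) := by
  have hπ : (0:ℝ) < π := Real.pi_pos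
  have hsin : 0 < Real.sin (π * (α / 2)) := by
    apply Real.sin_pos_of_pos_of_lt_pi <;> nlinarith
  have hkr : (2:ℝ) ≤ (k:ℝ) := by exact_mod_cast hk
  have hrefl := Real.Gamma_mul_Gamma_one_sub (α / 2 - (k:ℝ) + 1)
  have h1x : 1 - (α / 2 - (k:ℝ) + 1) = (k:ℝ) - α / 2 := by ring
  rw [h1x] at hrefl
  have hsin2 : Real.sin (π * (α / 2 - (k:ℝ) + 1)) = -((-1:ℝ)^k * Real.sin (π * (α / 2))) := by
    have h : π * (α / 2 - (k:ℝ) + 1) = (π * (α/2) + π) + (-k : ℤ) * π := by push_cast; ring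
    rw [h, Real.sin_add_int_mul_pi, Real.sin_add_pi, zpow_neg]
    rw [show ((-1:ℝ)^k)⁻¹ = (-1:ℝ)^k from by
      rcases Int.even_or_odd k with h | h
      · rw [h.neg_one_zpow]; norm_num
      · rw [Odd.neg_one_zpow h]; norm_num]
    ring
  rw [hsin2] at hrefl
  set s : ℝ := -((-1:ℝ)^k * Real.sin (π * (α / 2))) with hs_def
  have hpow := neg_one_zpow_mul_self k
  have hs : s ≠ 0 := by
    rw [hs_def]
    rcases Int.even_or_odd k with he | he
    · rw [he.neg_one_zpow]; nlinarith
    · rw [Odd.neg_one_zpow he]; nlinarith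
  have hG1 : 0 < Real.Gamma ((k:ℝ) - α / 2) := Real.Gamma_pos_of_pos (by linarith)
  have hG2 : 0 < Real.Gamma ((k:ℝ) + α / 2 + 1) := Real.Gamma_pos_of_pos (by linarith)
  have hmul : Real.Gamma (α / 2 - (k:ℝ) + 1) * Real.Gamma ((k:ℝ) - α/2) * s = π :=
    (div_eq_iff hs).mp hrefl.symm |>.symm ▸ by
      rw [hrefl, div_mul_cancel₀ _ hs]
  have hΓa : Real.Gamma (α / 2 - (k:ℝ) + 1) = π / (s * Real.Gamma ((k:ℝ) - α/2)) := by
    rw [eq_div_iff (mul_ne_zero hs hG1.ne')]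
    linear_combination hmul
  have hc : α / 2 + (k:ℝ) + 1 = (k:ℝ) + α/2 + 1 := by ring
  have hπ' : π ≠ 0 := hπ.ne'
  have hsin' : Real.sin (π * (α / 2)) ≠ 0 := hsin.ne'
  rw [fracCoeff, hΓa, hc, hs_def]
  rcases Int.even_or_odd k with he | he
  · rw [he.neg_one_zpow]
    field_simp
  · rw [Odd.neg_one_zpow he]
    field_simp

lemma tele (β x : ℝ) (hβ : 0 < β) (hx : 0 < x - β) :
    Real.Gamma (x - β) / Real.Gamma (x + β) - Real.Gamma (x + 1 - β) / Real.Gamma (x + 1 + β)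
      = 2 * β * (Real.Gamma (x - β) / Real.Gamma (x + β + 1)) := by
  have h1 : Real.Gamma (x + 1 - β) = (x - β) * Real.Gamma (x - β) := by
    rw [show x + 1 - β = (x - β) + 1 by ring, Real.Gamma_add_one hx.ne']
  have hxb : 0 < x + β := by linarith
  have h2 : Real.Gamma (x + 1 + β) = (x + β) * Real.Gamma (x + β) := by
    rw [show x + 1 + β = (x + β) + 1 by ring, Real.Gamma_add_one hxb.ne']
  have h3 : Real.Gamma (x + β + 1) = (x + β) * Real.Gamma (x + β) :=
    Real.Gamma_add_one hxb.ne'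
  have hG : 0 < Real.Gamma (x + β) := Real.Gamma_pos_of_pos hxb
  rw [h1, h2, h3]
  field_simp
  ring

lemma stepU (α x : ℝ) (hα1 : 1 < α) (hα2 : α < 2) (hx : 3 ≤ x) :
    (x - α/2) * (x + 1 + α/2) ^ α ≤ (x + α/2) ^ (α + 1) := by
  set u := x + α/2 with hu_def
  have hu : 0 < u := by simp only [hu_def]; linarith
  have hxa : 0 < x - α/2 := by linarith
  set w := (u+1)/u with hw_def
  have hw : 0 < w := by positivity
  have h1 : x + 1 + α/2 = u * w := by
    rw [hw_def]; field_simp; simp only [hu_def]; ring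
  have h2 : (u * w) ^ α = u ^ α * w ^ α := Real.mul_rpow hu.le hw.le
  have h3 : w ^ α = w * w ^ (α-1) := by
    have h := Real.rpow_add hw 1 (α-1)
    rw [Real.rpow_one] at h
    rw [show (1:ℝ) + (α-1) = α by ring] at h
    exact h
  have h4 : w ^ (α-1) ≤ 1 + (α-1) * (1/u) := by
    rw [show w = 1 + 1/u by rw [hw_def]; field_simp]
    exact rpow_one_add_le_one_add_mul_self (le_trans (by norm_num) (by positivity : (0:ℝ) ≤ 1/u)) (by linarith) (by linarith)
  have h5 : (u:ℝ) ^ (α+1) = u ^ α * u := by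
    rw [Real.rpow_add hu, Real.rpow_one]
  rw [h1, h2, h5, h3]
  have hkey : (x - α/2) * (w * (1 + (α-1) * (1/u))) ≤ u := by
    rw [hw_def]
    rw [div_mul_eq_mul_div, ← sub_nonneg]
    have expand : u - (x - α/2) * ((u+1) * (1 + (α-1) * (1/u)) / u)
        = (u^3 - (x - α/2) * ((u+1) * (u + α - 1))) / u^2 := by
      field_simp
      ring
    rw [expand]
    apply div_nonneg _ (by positivity)
    have hx2 : x - α/2 = u - α := by simp only [hu_def]; ring
    rw [hx2]
    nlinarith [mul_nonneg hu.le (by nlinarith : (0:ℝ) ≤ α^2 - α + 1),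
      mul_nonneg (by linarith : (0:ℝ) ≤ α) (by linarith : (0:ℝ) ≤ α - 1)]
  calc (x - α/2) * (u ^ α * (w * w ^ (α-1)))
      ≤ (x - α/2) * (u ^ α * (w * (1 + (α-1) * (1/u)))) := by
        apply mul_le_mul_of_nonneg_left _ hxa.le
        apply mul_le_mul_of_nonneg_left _ (by positivity)
        exact mul_le_mul_of_nonneg_left h4 hw.le
    _ = u ^ α * ((x - α/2) * (w * (1 + (α-1) * (1/u)))) := by ring
    _ ≤ u ^ α * u := mul_le_mul_of_nonneg_left hkey (by positivity)


lemma stepL (α x : ℝ) (hα1 : 1 < α) (hα2 : α < 2) (hx : 3 ≤ x) :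
    (x + α/2) ^ (2*α + 2) ≤ (x - α/2) * (x + 1 + α/2) ^ (2*α + 1) := by
  set u := x + α/2 with hu_def
  have hu : 0 < u := by simp only [hu_def]; linarith
  have hu3 : 3 + α/2 ≤ u := by simp only [hu_def]; linarith
  have hxa : 0 < x - α/2 := by linarith
  set w := (u+1)/u with hw_def
  have hw : 0 < w := by positivity
  clear_value u w
  have h1 : x + 1 + α/2 = u * w := by
    rw [hw_def, hu_def]; field_simp; ring
  have h2 : (u * w) ^ (2*α+1) = u ^ (2*α+1) * w ^ (2*α+1) := Real.mul_rpow hu.le hw.le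
  have h4 : 1 + (2*α+1) * (1/u) ≤ w ^ (2*α+1) := by
    rw [show w = 1 + 1/u by rw [hw_def]; field_simp]
    exact one_add_mul_self_le_rpow_one_add
      (le_trans (by norm_num) (by positivity : (0:ℝ) ≤ 1/u)) (by linarith)
  have h5 : (u:ℝ) ^ (2*α+2) = u ^ (2*α+1) * u := by
    rw [show 2*α+2 = (2*α+1) + 1 by ring, Real.rpow_add hu, Real.rpow_one]
  rw [h1, h2, h5]
  have hkey : u ≤ (x - α/2) * (1 + (2*α+1) * (1/u)) := by
    rw [← sub_nonneg]
    have hx2 : x - α/2 = u - α := by simp only [hu_def]; ring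
    have expand : (x - α/2) * (1 + (2*α+1) * (1/u)) - u
        = ((u - α) * (u + 2*α+1) - u^2) / u := by
      rw [hx2]; field_simp; ring
    rw [expand]
    apply div_nonneg _ hu.le
    have heq : (u - α) * (u + 2*α+1) - u^2 = (α+1)*u - 2*α^2 - α := by ring
    rw [heq]
    have h6 : (α+1)*(3+α/2) ≤ (α+1)*u := mul_le_mul_of_nonneg_left hu3 (by linarith)
    nlinarith [h6, mul_nonneg (by linarith : (0:ℝ) ≤ 2-α) (by linarith : (0:ℝ) ≤ α+1)]
  calc u ^ (2*α+1) * u ≤ u ^ (2*α+1) * ((x - α/2) * (1 + (2*α+1) * (1/u))) :=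
        mul_le_mul_of_nonneg_left hkey (by positivity)
    _ ≤ u ^ (2*α+1) * ((x - α/2) * w ^ (2*α+1)) := by
        apply mul_le_mul_of_nonneg_left _ (by positivity)
        exact mul_le_mul_of_nonneg_left h4 hxa.le
    _ = (x - α/2) * (u ^ (2*α+1) * w ^ (2*α+1)) := by ring

lemma iter_le (f : ℝ → ℝ) (h : ∀ x : ℝ, 3 ≤ x → f (x+1) ≤ f x) (m : ℕ) : f (3+m) ≤ f 3 := by
  induction m with
  | zero => simp
  | succ k ih =>
    have h3 : (3:ℝ) ≤ 3 + k := le_add_of_nonneg_right (Nat.cast_nonneg k)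
    have hc : (3:ℝ) + ((k:ℕ)+1:ℕ) = (3 + (k:ℝ)) + 1 := by push_cast; ring
    rw [hc]
    exact (h _ h3).trans ih

lemma iter_ge (f : ℝ → ℝ) (h : ∀ x : ℝ, 3 ≤ x → f x ≤ f (x+1)) (m : ℕ) : f 3 ≤ f (3+m) := by
  induction m with
  | zero => simp
  | succ k ih =>
    have h3 : (3:ℝ) ≤ 3 + k := le_add_of_nonneg_right (Nat.cast_nonneg k)
    have hc : (3:ℝ) + ((k:ℕ)+1:ℕ) = (3 + (k:ℝ)) + 1 := by push_cast; ring
    rw [hc]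
    exact ih.trans (h _ h3)

lemma ratioU (α : ℝ) (hα1 : 1 < α) (hα2 : α < 2) (m : ℕ) :
    Real.Gamma (3+(m:ℝ) - α/2) / Real.Gamma (3+(m:ℝ) + α/2) * (3+(m:ℝ)+α/2)^α
      ≤ Real.Gamma (3 - α/2) / Real.Gamma (3 + α/2) * (3+α/2)^α := by
  have key := iter_le (fun x => Real.Gamma (x - α/2) / Real.Gamma (x + α/2) * (x+α/2)^α) ?_ m
  · simpa using key
  intro x hx
  have hxb : 0 < x - α/2 := by linarith
  have hxb2 : 0 < x + α/2 := by linarith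
  have h1 : Real.Gamma (x + 1 - α/2) = (x - α/2) * Real.Gamma (x - α/2) := by
    rw [show x + 1 - α/2 = (x - α/2) + 1 by ring, Real.Gamma_add_one hxb.ne']
  have h2 : Real.Gamma (x + 1 + α/2) = (x + α/2) * Real.Gamma (x + α/2) := by
    rw [show x + 1 + α/2 = (x + α/2) + 1 by ring, Real.Gamma_add_one hxb2.ne']
  have hG1 : 0 < Real.Gamma (x - α/2) := Real.Gamma_pos_of_pos hxb
  have hG2 : 0 < Real.Gamma (x + α/2) := Real.Gamma_pos_of_pos hxb2
  rw [h1, h2]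
  have hs := stepU α x hα1 hα2 hx
  have hr : (x + α/2)^(α+1) = (x+α/2)^α * (x+α/2) := by
    rw [Real.rpow_add hxb2, Real.rpow_one]
  rw [hr] at hs
  -- goal: (x-β)Γ(x-β)/((x+β)Γ(x+β)) * (x+1+β)^α ≤ Γ(x-β)/Γ(x+β) * (x+β)^α
  rw [div_mul_eq_mul_div, div_mul_eq_mul_div, div_le_div_iff₀ (by positivity) (by positivity)]
  have hrp : (0:ℝ) ≤ (x + 1 + α/2)^α := Real.rpow_nonneg (by linarith) α
  calc (x - α/2) * Real.Gamma (x - α/2) * (x+1+α/2)^α * Real.Gamma (x + α/2)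
      = Real.Gamma (x - α/2) * Real.Gamma (x + α/2) * ((x - α/2) * (x+1+α/2)^α) := by ring
    _ ≤ Real.Gamma (x - α/2) * Real.Gamma (x + α/2) * ((x+α/2)^α * (x+α/2)) := by
        apply mul_le_mul_of_nonneg_left hs (by positivity)
    _ = Real.Gamma (x - α/2) * (x+α/2)^α * ((x + α/2) * Real.Gamma (x + α/2)) := by ring

lemma ratioL (α : ℝ) (hα1 : 1 < α) (hα2 : α < 2) (m : ℕ) :
    Real.Gamma (3 - α/2) / Real.Gamma (3 + α/2) * (3+α/2)^(2*α+1)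
      ≤ Real.Gamma (3+(m:ℝ) - α/2) / Real.Gamma (3+(m:ℝ) + α/2) * (3+(m:ℝ)+α/2)^(2*α+1) := by
  have key := iter_ge (fun x => Real.Gamma (x - α/2) / Real.Gamma (x + α/2) * (x+α/2)^(2*α+1)) ?_ m
  · simpa using key
  intro x hx
  have hxb : 0 < x - α/2 := by linarith
  have hxb2 : 0 < x + α/2 := by linarith
  have h1 : Real.Gamma (x + 1 - α/2) = (x - α/2) * Real.Gamma (x - α/2) := by
    rw [show x + 1 - α/2 = (x - α/2) + 1 by ring, Real.Gamma_add_one hxb.ne']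
  have h2 : Real.Gamma (x + 1 + α/2) = (x + α/2) * Real.Gamma (x + α/2) := by
    rw [show x + 1 + α/2 = (x + α/2) + 1 by ring, Real.Gamma_add_one hxb2.ne']
  have hG1 : 0 < Real.Gamma (x - α/2) := Real.Gamma_pos_of_pos hxb
  have hG2 : 0 < Real.Gamma (x + α/2) := Real.Gamma_pos_of_pos hxb2
  rw [h1, h2]
  have hs := stepL α x hα1 hα2 hx
  have hr : (x + α/2)^(2*α+2) = (x+α/2)^(2*α+1) * (x+α/2) := by
    rw [show 2*α+2 = (2*α+1)+1 by ring, Real.rpow_add hxb2, Real.rpow_one]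
  rw [hr] at hs
  rw [div_mul_eq_mul_div, div_mul_eq_mul_div, div_le_div_iff₀ (by positivity) (by positivity)]
  calc Real.Gamma (x - α/2) * (x+α/2)^(2*α+1) * ((x + α/2) * Real.Gamma (x + α/2))
      = Real.Gamma (x - α/2) * Real.Gamma (x + α/2) * ((x+α/2)^(2*α+1) * (x+α/2)) := by ring
    _ ≤ Real.Gamma (x - α/2) * Real.Gamma (x + α/2) * ((x - α/2) * (x+1+α/2)^(2*α+1)) := by
        apply mul_le_mul_of_nonneg_left hs (by positivity)
    _ = (x - α/2) * Real.Gamma (x - α/2) * (x+1+α/2)^(2*α+1) * Real.Gamma (x + α/2) := by ring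


set_option maxHeartbeats 1000000 in
theorem fracCoeff_tail_sum_bound (α : ℝ) (hα1 : 1 < α) (hα2 : α < 2)
    (n : ℤ) (hn : 3 ≤ n) :
    Summable (fun j : ℕ => |fracCoeff α (n + j)|) ∧
    Scoeff α * (α + 2 * (n : ℝ)) ^ (-(2 * α + 1)) * (α + 4) ^ (2 * (α + 1))
        / (2 * (2 * α + 1))
      < ∑' j : ℕ, |fracCoeff α (n + j)| ∧
    ∑' j : ℕ, |fracCoeff α (n + j)|
      < Scoeff α * (α + 2 * (n : ℝ)) ^ (-α) * (α + 6) ^ (α + 1) / (2 * α) := by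
  have hπ : (0:ℝ) < π := Real.pi_pos
  have hsin : 0 < Real.sin (π * (α / 2)) := by
    apply Real.sin_pos_of_pos_of_lt_pi <;> nlinarith
  set P : ℝ := Real.Gamma (α + 1) * Real.sin (π * (α / 2)) / π with hP_def
  have hP : 0 < P := by
    apply div_pos (mul_pos (Real.Gamma_pos_of_pos (by linarith)) hsin) hπ
  set nr : ℝ := (n : ℝ) with hnr_def
  have hnr3 : (3:ℝ) ≤ nr := by rw [hnr_def]; exact_mod_cast hn
  have hα0 : (0:ℝ) < α := by linarith
  -- the ratio sequence
  set A : ℕ → ℝ := fun j => Real.Gamma (nr + j - α/2) / Real.Gamma (nr + j + α/2) with hA_def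
  have hA_pos : ∀ j : ℕ, 0 < A j := by
    intro j
    have h1 : 0 < nr + j - α/2 := by
      have : (0:ℝ) ≤ j := Nat.cast_nonneg j
      linarith
    have h2 : 0 < nr + j + α/2 := by
      have : (0:ℝ) ≤ j := Nat.cast_nonneg j
      linarith
    exact div_pos (Real.Gamma_pos_of_pos h1) (Real.Gamma_pos_of_pos h2)
  have htele : ∀ j : ℕ, A j - A (j+1) = α * (Real.Gamma (nr + j - α/2) / Real.Gamma (nr + j + α/2 + 1)) := by
    intro j
    have hj : (0:ℝ) ≤ j := Nat.cast_nonneg j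
    have h := tele (α/2) (nr + j) (by linarith) (by linarith)
    have hc1 : nr + (j+1:ℕ) - α/2 = nr + j + 1 - α/2 := by push_cast; ring
    have hc2 : nr + (j+1:ℕ) + α/2 = nr + j + 1 + α/2 := by push_cast; ring
    simp only [hA_def, hc1, hc2]
    calc Real.Gamma (nr + ↑j - α / 2) / Real.Gamma (nr + ↑j + α / 2)
          - Real.Gamma (nr + ↑j + 1 - α / 2) / Real.Gamma (nr + ↑j + 1 + α / 2)
        = 2 * (α/2) * (Real.Gamma (nr + ↑j - α/2) / Real.Gamma (nr + ↑j + α/2 + 1)) := h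
      _ = α * (Real.Gamma (nr + j - α/2) / Real.Gamma (nr + j + α/2 + 1)) := by ring
  have hterm : ∀ j : ℕ, |fracCoeff α (n + j)| = (P/α) * (A j - A (j+1)) := by
    intro j
    have hj : (0:ℝ) ≤ j := Nat.cast_nonneg j
    have hk : (2:ℤ) ≤ n + j := by
      have : (0:ℤ) ≤ (j:ℤ) := Int.natCast_nonneg j
      omega
    have hfc := fracCoeff_eq α hα1 hα2 (n + j) hk
    have hcast : ((n + (j:ℤ) : ℤ) : ℝ) = nr + j := by push_cast [hnr_def]; ring
    rw [hcast] at hfc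
    have hGr : 0 < Real.Gamma (nr + j - α/2) / Real.Gamma (nr + j + α/2 + 1) := by
      apply div_pos (Real.Gamma_pos_of_pos (by linarith)) (Real.Gamma_pos_of_pos (by linarith))
    rw [hfc, abs_mul, abs_neg, abs_div, abs_of_pos (mul_pos (Real.Gamma_pos_of_pos
      (by linarith : (0:ℝ) < α+1)) hsin), abs_of_pos hπ, abs_of_pos hGr, htele]
    rw [hP_def]
    field_simp
  -- summability and sum value
  have hA_le : ∀ j : ℕ, A j ≤ (nr + j + α/2 - 1)⁻¹ := by
    intro j
    have hj : (0:ℝ) ≤ j := Nat.cast_nonneg j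
    have hc : 0 < nr + j + α/2 - 1 := by linarith
    have hmem1 : (nr + j - α/2) ∈ Set.Ici (2:ℝ) := by
      simp only [Set.mem_Ici]; linarith
    have hmem2 : (nr + j + α/2 - 1) ∈ Set.Ici (2:ℝ) := by
      simp only [Set.mem_Ici]; linarith
    have hmono := Real.Gamma_strictMonoOn_Ici.monotoneOn hmem1 hmem2 (by linarith)
    have hsplit := Real.Gamma_add_one hc.ne'
    rw [show (nr + ↑j + α/2 - 1) + 1 = nr + ↑j + α/2 by ring] at hsplit
    have hGpos : 0 < Real.Gamma (nr + j + α/2 - 1) := Real.Gamma_pos_of_pos (by linarith)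
    have hAeq : A j = Real.Gamma (nr + ↑j - α / 2)
        / ((nr + ↑j + α/2 - 1) * Real.Gamma (nr + ↑j + α/2 - 1)) := by
      simp only [hA_def]; rw [hsplit]
    rw [hAeq, div_le_iff₀ (by positivity)]
    calc Real.Gamma (nr + ↑j - α / 2) ≤ Real.Gamma (nr + ↑j + α/2 - 1) := hmono
      _ = (nr + ↑j + α / 2 - 1)⁻¹ * ((nr + ↑j + α/2 - 1) * Real.Gamma (nr + ↑j + α/2 - 1)) :=
          (inv_mul_cancel_left₀ hc.ne' _).symm
  have hA_tend : Filter.Tendsto A Filter.atTop (nhds 0) := by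
    apply squeeze_zero (fun j => (hA_pos j).le) hA_le
    apply Filter.Tendsto.comp tendsto_inv_atTop_zero
    have : (fun j : ℕ => nr + j + α/2 - 1) = (fun j : ℕ => (j:ℝ) + (nr + α/2 - 1)) := by
      funext j; ring
    rw [this]
    exact Filter.tendsto_atTop_add_const_right _ _ tendsto_natCast_atTop_atTop
  have hsum0 : HasSum (fun j : ℕ => A j - A (j+1)) (A 0) := by
    rw [hasSum_iff_tendsto_nat_of_nonneg (fun j => by
      rw [htele j]
      have hj : (0:ℝ) ≤ j := Nat.cast_nonneg j
      exact mul_nonneg hα0.le (le_of_lt (div_pos (Real.Gamma_pos_of_pos (by linarith))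
        (Real.Gamma_pos_of_pos (by linarith)))))]
    have hps : ∀ m : ℕ, ∑ i ∈ Finset.range m, (A i - A (i+1)) = A 0 - A m := by
      intro m; exact Finset.sum_range_sub' A m
    simp only [hps]
    have := (tendsto_const_nhds (x := A 0) (f := Filter.atTop (α := ℕ))).sub hA_tend
    simpa using this
  have hsum : HasSum (fun j : ℕ => |fracCoeff α (n + j)|) ((P/α) * A 0) := by
    have h := hsum0.mul_left (P/α)
    apply h.congr_fun
    intro j
    exact hterm j
  set Q : ℝ := Real.Gamma (nr - α/2) / Real.Gamma (nr + α/2) with hQ_def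
  have hQA : A 0 = Q := by simp [hA_def, hQ_def]
  have hQpos : 0 < Q := by
    rw [hQ_def]
    exact div_pos (Real.Gamma_pos_of_pos (by linarith)) (Real.Gamma_pos_of_pos (by linarith))
  have htsum : (∑' j : ℕ, |fracCoeff α (n + j)|) = (P/α) * Q := by
    rw [hsum.tsum_eq, hQA]
  set R : ℝ := Real.Gamma (2 - α/2) / Real.Gamma (α/2 + 3) with hR_def
  have hRpos : 0 < R := by
    rw [hR_def]
    exact div_pos (Real.Gamma_pos_of_pos (by linarith)) (Real.Gamma_pos_of_pos (by linarith))
  -- Scoeff in terms of P and R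
  have hSc : Scoeff α = P * R := by
    have h2 := fracCoeff_eq α hα1 hα2 2 le_rfl
    have hc2 : ((2:ℤ):ℝ) = (2:ℝ) := by norm_num
    rw [hc2] at h2
    have hfc2 : fracCoeff α 2 = -Scoeff α := by
      rw [fracCoeff, Scoeff]
      rw [show ((-1:ℝ)^(2:ℤ)) = 1 by norm_num]
      rw [show α/2 - ((2:ℤ):ℝ) + 1 = α/2 - 1 by push_cast; ring]
      rw [show α/2 + ((2:ℤ):ℝ) + 1 = α/2 + 3 by push_cast; ring]
      ring
    rw [hfc2] at h2
    have h3 : Scoeff α = (Real.Gamma (α+1) * Real.sin (π*(α/2))/π)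
        * (Real.Gamma (2-α/2)/Real.Gamma (2+α/2+1)) := by linarith [h2]
    rw [show (2:ℝ)+α/2+1 = α/2+3 by ring] at h3
    rw [h3, hP_def, hR_def]
  -- endpoint Gamma conversion
  have hG3m : Real.Gamma (3 - α/2) = (2 - α/2) * Real.Gamma (2 - α/2) := by
    have h := Real.Gamma_add_one (by linarith : (2:ℝ) - α/2 ≠ 0)
    rw [show (2:ℝ) - α/2 + 1 = 3 - α/2 by ring] at h
    exact h
  have hG3p : Real.Gamma (3 + α/2) = Real.Gamma (α/2 + 3) := by
    rw [show (3:ℝ) + α/2 = α/2 + 3 by ring]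
  -- express nr = 3 + m
  obtain ⟨m, hm⟩ : ∃ m : ℕ, nr = 3 + (m:ℝ) := by
    refine ⟨(n - 3).toNat, ?_⟩
    have h0 : (((n - 3).toNat : ℤ) : ℝ) = (n : ℝ) - 3 := by
      rw [Int.toNat_of_nonneg (by omega : (0:ℤ) ≤ n - 3)]
      push_cast
      ring
    rw [hnr_def]
    rw [show (((n - 3).toNat : ℕ) : ℝ) = (((n - 3).toNat : ℤ) : ℝ) by push_cast; ring, h0]
    ring
  have hxpos : 0 < nr + α/2 := by linarith
  have hx3pos : (0:ℝ) < 3 + α/2 := by linarith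
  -- upper bound key
  have hU : Q * (nr + α/2) ^ α ≤ (2 - α/2) * R * (3 + α/2) ^ α := by
    have h := ratioU α hα1 hα2 m
    rw [← hm] at h
    rw [hG3m, hG3p] at h
    calc Q * (nr + α/2) ^ α
        = Real.Gamma (nr - α/2) / Real.Gamma (nr + α/2) * (nr + α/2) ^ α := by rw [hQ_def]
      _ ≤ (2 - α/2) * Real.Gamma (2 - α/2) / Real.Gamma (α/2 + 3) * (3 + α/2) ^ α := h
      _ = (2 - α/2) * R * (3 + α/2) ^ α := by rw [hR_def]; ring
  have hL : (2 - α/2) * R * (3 + α/2) ^ (2*α+1) ≤ Q * (nr + α/2) ^ (2*α+1) := by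
    have h := ratioL α hα1 hα2 m
    rw [← hm] at h
    rw [hG3m, hG3p] at h
    calc (2 - α/2) * R * (3 + α/2) ^ (2*α+1)
        = (2 - α/2) * Real.Gamma (2 - α/2) / Real.Gamma (α/2 + 3) * (3 + α/2) ^ (2*α+1) := by
          rw [hR_def]; ring
      _ ≤ Real.Gamma (nr - α/2) / Real.Gamma (nr + α/2) * (nr + α/2) ^ (2*α+1) := h
      _ = Q * (nr + α/2) ^ (2*α+1) := by rw [hQ_def]
  have hKU : Q * (nr + α/2) ^ α < R * (3 + α/2) ^ (α+1) := by
    have hstep : (2 - α/2) * R * (3 + α/2) ^ α < (3 + α/2) * R * (3 + α/2) ^ α := by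
      apply mul_lt_mul_of_pos_right _ (by positivity)
      apply mul_lt_mul_of_pos_right _ hRpos
      linarith
    have hid : (3 + α/2) * R * (3 + α/2) ^ α = R * (3 + α/2) ^ (α+1) := by
      rw [Real.rpow_add hx3pos, Real.rpow_one]; ring
    linarith [hU, hstep, hid.symm.le]
  have hKL : α * R * (2 + α/2) ^ (2*α+2) / (2*α+1) < Q * (nr + α/2) ^ (2*α+1) := by
    have hx2pos : (0:ℝ) < 2 + α/2 := by linarith
    set T : ℝ := (2 + α/2) ^ (2*α+1) with hT_def
    have hT : 0 < T := Real.rpow_pos_of_pos hx2pos _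
    have hsplit1 : (2 + α/2) ^ (2*α+2) = T * (2 + α/2) := by
      rw [hT_def, show 2*α+2 = (2*α+1)+1 by ring, Real.rpow_add hx2pos, Real.rpow_one]
    have h43 : (64/27 : ℝ) ≤ (4/3 : ℝ) ^ (2*α+1) := by
      have h1 : ((4:ℝ)/3) ^ ((3:ℕ):ℝ) ≤ (4/3 : ℝ) ^ (2*α+1) :=
        Real.rpow_le_rpow_of_exponent_le (by norm_num) (by push_cast; linarith)
      rw [Real.rpow_natCast] at h1
      norm_num at h1
      linarith
    have h34 : (4/3 : ℝ) ^ (2*α+1) * T ≤ (3 + α/2) ^ (2*α+1) := by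
      rw [hT_def, ← Real.mul_rpow (by norm_num) hx2pos.le]
      apply Real.rpow_le_rpow (by positivity) (by linarith) (by linarith)
    have hc1 : α * (2 + α/2) / (2*α+1) < 2 := by
      rw [div_lt_iff₀ (by linarith)]
      nlinarith
    have hend : α * (2 + α/2) ^ (2*α+2) / (2*α+1) < (2 - α/2) * (3 + α/2) ^ (2*α+1) := by
      calc α * (2 + α/2) ^ (2*α+2) / (2*α+1)
          = (α * (2 + α/2) / (2*α+1)) * T := by rw [hsplit1]; ring
        _ < 2 * T := mul_lt_mul_of_pos_right hc1 hT
        _ ≤ ((2 - α/2) * (64/27)) * T := by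
            apply mul_le_mul_of_nonneg_right _ hT.le
            nlinarith
        _ ≤ ((2 - α/2) * ((4/3:ℝ) ^ (2*α+1))) * T := by
            apply mul_le_mul_of_nonneg_right _ hT.le
            apply mul_le_mul_of_nonneg_left h43 (by linarith)
        _ = (2 - α/2) * ((4/3:ℝ) ^ (2*α+1) * T) := by ring
        _ ≤ (2 - α/2) * (3 + α/2) ^ (2*α+1) := by
            apply mul_le_mul_of_nonneg_left h34 (by linarith)
    calc α * R * (2 + α/2) ^ (2*α+2) / (2*α+1)
        = R * (α * (2 + α/2) ^ (2*α+2) / (2*α+1)) := by ring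
      _ < R * ((2 - α/2) * (3 + α/2) ^ (2*α+1)) := by
          exact mul_lt_mul_of_pos_left hend hRpos
      _ = (2 - α/2) * R * (3 + α/2) ^ (2*α+1) := by ring
      _ ≤ Q * (nr + α/2) ^ (2*α+1) := hL
  -- rpow bookkeeping
  have h2pos : (0:ℝ) < 2 := two_pos
  have hxinv : (nr + α/2) ^ α * (nr + α/2) ^ (-α) = 1 := by
    rw [← Real.rpow_add hxpos, show α + -α = 0 by ring, Real.rpow_zero]
  have hxinv2 : (nr + α/2) ^ (2*α+1) * (nr + α/2) ^ (-(2*α+1)) = 1 := by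
    rw [← Real.rpow_add hxpos, show 2*α+1 + -(2*α+1) = 0 by ring, Real.rpow_zero]
  have hxneg : (0:ℝ) < (nr + α/2) ^ (-α) := Real.rpow_pos_of_pos hxpos _
  have hxneg2 : (0:ℝ) < (nr + α/2) ^ (-(2*α+1)) := Real.rpow_pos_of_pos hxpos _
  have hPa : 0 < P / α := div_pos hP hα0
  -- upper bound: rewrite RHS
  have hrhsU : Scoeff α * (α + 2 * nr) ^ (-α) * (α + 6) ^ (α + 1) / (2 * α)
      = (P/α) * (R * (3 + α/2) ^ (α+1) * (nr + α/2) ^ (-α)) := by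
    rw [hSc, show α + 2 * nr = 2 * (nr + α/2) by ring, show α + 6 = 2 * (3 + α/2) by ring]
    rw [Real.mul_rpow (by norm_num) hxpos.le, Real.mul_rpow (by norm_num) hx3pos.le]
    have h2id : (2:ℝ) ^ (-α) * (2:ℝ) ^ (α+1) = 2 := by
      rw [← Real.rpow_add h2pos, show -α + (α+1) = 1 by ring, Real.rpow_one]
    have key : ∀ X Y : ℝ, P*R*((2:ℝ)^(-α)*X)*((2:ℝ)^(α+1)*Y)/(2*α) = (P/α)*(R*Y*X) := by
      intro X Y
      calc P*R*((2:ℝ)^(-α)*X)*((2:ℝ)^(α+1)*Y)/(2*α)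
          = P*R*X*Y*((2:ℝ)^(-α)*(2:ℝ)^(α+1))/(2*α) := by ring
        _ = P*R*X*Y*2/(2*α) := by rw [h2id]
        _ = (P/α)*(R*Y*X) := by field_simp
    exact key _ _
  have hrhsL : Scoeff α * (α + 2 * nr) ^ (-(2*α+1)) * (α + 4) ^ (2*(α+1)) / (2 * (2*α+1))
      = (P/α) * (α * R * (2 + α/2) ^ (2*α+2) / (2*α+1) * (nr + α/2) ^ (-(2*α+1))) := by
    have hx2pos : (0:ℝ) < 2 + α/2 := by linarith
    rw [hSc, show α + 2 * nr = 2 * (nr + α/2) by ring, show α + 4 = 2 * (2 + α/2) by ring,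
      show 2*(α+1) = 2*α+2 by ring]
    rw [Real.mul_rpow (by norm_num) hxpos.le, Real.mul_rpow (by norm_num) hx2pos.le]
    have h2id : (2:ℝ) ^ (-(2*α+1)) * (2:ℝ) ^ (2*α+2) = 2 := by
      rw [← Real.rpow_add h2pos, show -(2*α+1) + (2*α+2) = 1 by ring, Real.rpow_one]
    have key : ∀ X Y : ℝ, P*R*((2:ℝ)^(-(2*α+1))*X)*((2:ℝ)^(2*α+2)*Y)/(2*(2*α+1))
        = (P/α)*(α*R*Y/(2*α+1)*X) := by
      intro X Y
      have hd : (2*α+1 : ℝ) ≠ 0 := by linarith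
      calc P*R*((2:ℝ)^(-(2*α+1))*X)*((2:ℝ)^(2*α+2)*Y)/(2*(2*α+1))
          = P*R*X*Y*((2:ℝ)^(-(2*α+1))*(2:ℝ)^(2*α+2))/(2*(2*α+1)) := by ring
        _ = P*R*X*Y*2/(2*(2*α+1)) := by rw [h2id]
        _ = (P/α)*(α*R*Y/(2*α+1)*X) := by field_simp
    exact key _ _
  refine ⟨hsum.summable, ?_, ?_⟩
  · -- lower bound
    rw [htsum, hrhsL]
    apply mul_lt_mul_of_pos_left _ hPa
    have h := mul_lt_mul_of_pos_right hKL hxneg2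
    calc α * R * (2 + α/2) ^ (2*α+2) / (2*α+1) * (nr + α/2) ^ (-(2*α+1))
        < Q * (nr + α/2) ^ (2*α+1) * (nr + α/2) ^ (-(2*α+1)) := h
      _ = Q * ((nr + α/2) ^ (2*α+1) * (nr + α/2) ^ (-(2*α+1))) := by ring
      _ = Q := by rw [hxinv2, mul_one]
  · -- upper bound
    rw [htsum, hrhsU]
    apply mul_lt_mul_of_pos_left _ hPa
    have h := mul_lt_mul_of_pos_right hKU hxneg
    calc Q = Q * ((nr + α/2) ^ α * (nr + α/2) ^ (-α)) := by rw [hxinv, mul_one]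
      _ = Q * (nr + α/2) ^ α * (nr + α/2) ^ (-α) := by ring
      _ < R * (3 + α/2) ^ (α+1) * (nr + α/2) ^ (-α) := h
end

section
/- For all reals α₁, α₂ with 1 ≤ α₁ < α₂ ≤ 2 and every integer k, the fractional centred difference coefficients are strictly monotone in α: if |k| ≠ 1 then g_k^{(α₁)} < g_k^{(α₂)}, while if |k| = 1 then g_k^{(α₁)} > g_k^{(α₂)}. Here at the endpoint α = 2 the coefficients are understood as their limiting values g_0^{(2)} = 2, g_{±1}^{(2)} = −1, and g_k^{(2)} = 0 for |k| ≥ 2. -/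
open Real

/-- The fractional centred difference coefficients extended to `α = 2` by their
limiting values: `g_0^{(2)} = 2`, `g_{±1}^{(2)} = −1`, `g_k^{(2)} = 0` for `|k| ≥ 2`. -/
noncomputable def fracCoeffExt (α : ℝ) (k : ℤ) : ℝ :=
  if α = 2 then (if k = 0 then 2 else if |k| = 1 then -1 else 0) else fracCoeff α k

/-! ### Auxiliary material -/

section Aux

open MeasureTheory

/-- The real Beta integral. -/
lemma frac_realBeta {a b : ℝ} (ha : 0 < a) (hb : 0 < b) :
    ∫ t in (0:ℝ)..1, t ^ (a-1) * (1-t) ^ (b-1) = Gamma a * Gamma b / Gamma (a+b) := by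
  have h := Complex.Gamma_mul_Gamma_eq_betaIntegral (s := (a:ℂ)) (t := (b:ℂ))
    (by simpa using ha) (by simpa using hb)
  have hβ : Complex.betaIntegral (a:ℂ) (b:ℂ)
      = ((∫ t in (0:ℝ)..1, t ^ (a-1) * (1-t) ^ (b-1) : ℝ) : ℂ) := by
    rw [Complex.betaIntegral]
    rw [← intervalIntegral.integral_ofReal]
    refine intervalIntegral.integral_congr (fun x hx => ?_)
    rw [Set.uIcc_of_le (by norm_num : (0:ℝ) ≤ 1)] at hx
    rw [Complex.ofReal_mul, Complex.ofReal_cpow hx.1,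
      Complex.ofReal_cpow (by linarith [hx.2] : (0:ℝ) ≤ 1 - x)]
    push_cast
    ring
  rw [hβ, ← Complex.ofReal_add, Complex.Gamma_ofReal, Complex.Gamma_ofReal,
    Complex.Gamma_ofReal, ← Complex.ofReal_mul, ← Complex.ofReal_mul] at h
  have h2 := Complex.ofReal_injective h
  have hG : Gamma (a+b) ≠ 0 := (Gamma_pos_of_pos (by linarith)).ne'
  field_simp
  linarith [h2]

lemma frac_Gamma_two : Gamma (2:ℝ) = 1 := by
  rw [show (2:ℝ) = 1+1 by norm_num, Real.Gamma_add_one one_ne_zero, Real.Gamma_one]; ring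

lemma frac_Gamma_three : Gamma (3:ℝ) = 2 := by
  rw [show (3:ℝ) = 2+1 by norm_num, Real.Gamma_add_one two_ne_zero, frac_Gamma_two]; ring

lemma frac_Gamma_four : Gamma (4:ℝ) = 6 := by
  rw [show (4:ℝ) = 3+1 by norm_num, Real.Gamma_add_one (by norm_num), frac_Gamma_three]; ring

/-- The normalised symmetric Beta-type integral `∫ (4t(1-t))^s`. -/
noncomputable def fracKK (s : ℝ) : ℝ := ∫ t in (0:ℝ)..1, (4*(t*(1-t))) ^ s

lemma fracKK_contOn {s : ℝ} (hs : 0 < s) :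
    ContinuousOn (fun t : ℝ => (4*(t*(1-t))) ^ s) (Set.Icc 0 1) := by
  apply ContinuousOn.rpow_const
  · fun_prop
  · exact fun x _ => Or.inr hs.le

lemma fracKK_intble {s : ℝ} (hs : 0 < s) :
    IntervalIntegrable (fun t : ℝ => (4*(t*(1-t))) ^ s) volume 0 1 := by
  have h := fracKK_contOn hs
  apply ContinuousOn.intervalIntegrable
  rwa [Set.uIcc_of_le (by norm_num : (0:ℝ) ≤ 1)]

lemma fracKK_eq {s : ℝ} (hs : 0 < s) :
    fracKK s = (4:ℝ) ^ s * (Gamma (s+1) * Gamma (s+1) / Gamma ((s+1)+(s+1))) := by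
  have h1 : fracKK s = ∫ t in (0:ℝ)..1, (4:ℝ)^s * (t ^ ((s+1)-1) * (1-t) ^ ((s+1)-1)) := by
    rw [fracKK]
    refine intervalIntegral.integral_congr (fun t ht => ?_)
    rw [Set.uIcc_of_le (by norm_num : (0:ℝ) ≤ 1)] at ht
    rw [Real.mul_rpow (by norm_num) (mul_nonneg ht.1 (by linarith [ht.2])),
      Real.mul_rpow ht.1 (by linarith [ht.2])]
    ring_nf
  rw [h1, intervalIntegral.integral_const_mul, frac_realBeta (by linarith) (by linarith)]

lemma fracKK_half : fracKK (1/2) = π/4 := by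
  rw [fracKK_eq (by norm_num)]
  have h32 : Gamma ((1:ℝ)/2+1) = √π/2 := by
    rw [Real.Gamma_add_one (by norm_num), Real.Gamma_one_half_eq]; ring
  have h3 : Gamma ((1/2:ℝ)+1+((1/2:ℝ)+1)) = 2 := by
    rw [show ((1/2:ℝ)+1+((1/2:ℝ)+1)) = 3 by norm_num, frac_Gamma_three]
  have h4 : (4:ℝ)^((1:ℝ)/2) = 2 := by
    rw [show (4:ℝ) = 2^(2:ℕ) by norm_num, ← Real.rpow_natCast 2 2, ← Real.rpow_mul (by norm_num)]
    norm_num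
  rw [h32, h3, h4, show 2*(√π/2*(√π/2)/2) = √π*√π/4 by ring, Real.mul_self_sqrt pi_pos.le]

lemma fracKK_one : fracKK 1 = 2/3 := by
  rw [fracKK_eq (by norm_num)]
  have h2 : Gamma ((1:ℝ)+1) = 1 := by
    rw [Real.Gamma_add_one (by norm_num), Real.Gamma_one]; ring
  have h4 : Gamma ((1:ℝ)+1+((1:ℝ)+1)) = 6 := by
    rw [show ((1:ℝ)+1+((1:ℝ)+1)) = 4 by norm_num, frac_Gamma_four]
  rw [h2, h4, Real.rpow_one]
  norm_num

lemma frac_base_mem {t : ℝ} (ht : t ∈ Set.Icc (0:ℝ) 1) : 0 ≤ 4*(t*(1-t)) ∧ 4*(t*(1-t)) ≤ 1 := by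
  obtain ⟨h0, h1⟩ := ht
  constructor
  · nlinarith
  · nlinarith [sq_nonneg (2*t-1)]

lemma fracKK_mono {s₁ s₂ : ℝ} (h0 : 0 < s₁) (h12 : s₁ ≤ s₂) : fracKK s₂ ≤ fracKK s₁ := by
  apply intervalIntegral.integral_mono_on (by norm_num)
    (fracKK_intble (lt_of_lt_of_le h0 h12)) (fracKK_intble h0)
  intro t ht
  obtain ⟨hb0, hb1⟩ := frac_base_mem ht
  rcases eq_or_lt_of_le hb0 with h | h
  · rw [← h, Real.zero_rpow (by linarith : s₁ ≠ 0), Real.zero_rpow (by linarith : s₂ ≠ 0)]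
  · exact Real.rpow_le_rpow_of_exponent_ge h hb1 h12

lemma fracKK_ge {s : ℝ} (h0 : 0 < s) (h1 : s ≤ 1) : 2/3 ≤ fracKK s := by
  rw [← fracKK_one]; exact fracKK_mono h0 h1

lemma fracKK_pos {s : ℝ} (h0 : 0 < s) (h1 : s ≤ 1) : 0 < fracKK s :=
  lt_of_lt_of_le (by norm_num) (fracKK_ge h0 h1)

/-- Pointwise bound used for the two-point estimate on `fracKK`. -/
lemma frac_pw {u s₁ s₂ : ℝ} (hu0 : 0 ≤ u) (hu1 : u ≤ 1) (hs : 1/2 ≤ s₁) (h12 : s₁ ≤ s₂)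
    (hs2 : s₂ ≤ 1) :
    u ^ s₁ - u ^ s₂ ≤ 2*(s₂-s₁) * (1 - u ^ (1/2:ℝ)) := by
  rcases eq_or_lt_of_le hu0 with h | hu
  · rw [← h, Real.zero_rpow (by linarith : s₁ ≠ 0), Real.zero_rpow (by linarith : s₂ ≠ 0),
      Real.zero_rpow (by norm_num : (1/2:ℝ) ≠ 0)]
    nlinarith
  set σ : ℝ := 2*(s₂ - s₁) with hσdef
  have hσ0 : 0 ≤ σ := by simp [hσdef]; linarith
  have hσ1 : σ ≤ 1 := by simp [hσdef]; linarith
  set v : ℝ := u ^ (1/2:ℝ) with hvdef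
  have hv0 : 0 < v := Real.rpow_pos_of_pos hu _
  have hv1 : v ≤ 1 := Real.rpow_le_one hu0 hu1 (by norm_num)
  have hA : v ^ (1-σ) ≤ (1-σ)*v + σ := by
    have := Real.geom_mean_le_arith_mean2_weighted (by linarith : (0:ℝ) ≤ 1-σ) hσ0 hv0.le
      (zero_le_one) (by ring)
    simpa using this
  have e1 : v ^ (σ-1) * v ^ (1-σ) = 1 := by
    rw [← Real.rpow_add hv0]; norm_num
  have e2 : v ^ (σ-1) * v = v ^ σ := by
    nth_rewrite 2 [← Real.rpow_one v]
    rw [← Real.rpow_add hv0]; ring_nf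
  have h1 : 1 - v ^ σ ≤ σ * (v ^ (σ-1) * (1-v)) := by
    have hm := mul_le_mul_of_nonneg_left hA (Real.rpow_nonneg hv0.le (σ-1))
    nlinarith [hm, e1, e2]
  have h3 : u ^ (s₂ - s₁) = v ^ σ := by
    rw [hvdef, ← Real.rpow_mul hu0]
    norm_num
    ring_nf
    rw [hσdef]; ring_nf
  have h2 : u ^ s₁ - u ^ s₂ = u ^ s₁ * (1 - v ^ σ) := by
    rw [← h3, mul_sub, mul_one, ← Real.rpow_add hu]
    ring_nf
  have h4 : u ^ s₁ * v ^ (σ-1) = u ^ (s₂ - 1/2) := by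
    rw [hvdef, ← Real.rpow_mul hu0, ← Real.rpow_add hu]
    ring_nf
    rw [hσdef]; ring_nf
  have h5 : u ^ (s₂ - 1/2) ≤ 1 := Real.rpow_le_one hu0 hu1 (by linarith)
  have hu1s : 0 ≤ u ^ s₁ := Real.rpow_nonneg hu0 _
  calc u ^ s₁ - u ^ s₂ = u ^ s₁ * (1 - v ^ σ) := h2
    _ ≤ u ^ s₁ * (σ * (v ^ (σ-1) * (1-v))) := mul_le_mul_of_nonneg_left h1 hu1s
    _ = σ * (1-v) * (u ^ s₁ * v ^ (σ-1)) := by ring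
    _ ≤ σ * (1-v) * 1 := by
        apply mul_le_mul_of_nonneg_left (by rw [h4] at *; exact h5)
        exact mul_nonneg hσ0 (by linarith)
    _ = 2*(s₂-s₁) * (1 - v) := by rw [hσdef]; ring

/-- Two-point estimate on `fracKK`. -/
lemma fracKK_key {s₁ s₂ : ℝ} (hs : 1/2 ≤ s₁) (h12 : s₁ ≤ s₂) (hs2 : s₂ ≤ 1) :
    fracKK s₁ - fracKK s₂ ≤ 2*(s₂-s₁) * (1 - π/4) := by
  have hi1 := fracKK_intble (by linarith : (0:ℝ) < s₁)
  have hi2 := fracKK_intble (by linarith : (0:ℝ) < s₂)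
  have hihalf := fracKK_intble (by norm_num : (0:ℝ) < 1/2)
  have hL : fracKK s₁ - fracKK s₂ = ∫ t in (0:ℝ)..1,
      ((4*(t*(1-t))) ^ s₁ - (4*(t*(1-t))) ^ s₂) := by
    rw [fracKK, fracKK, intervalIntegral.integral_sub hi1 hi2]
  have hR : (2*(s₂-s₁) * (1 - π/4) : ℝ) = ∫ t in (0:ℝ)..1,
      (2*(s₂-s₁) * (1 - (4*(t*(1-t))) ^ (1/2:ℝ))) := by
    rw [intervalIntegral.integral_const_mul]
    have h0 : (∫ t in (0:ℝ)..1, (1 - (4*(t*(1-t))) ^ (1/2:ℝ)))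
        = 1 - π/4 := by
      rw [intervalIntegral.integral_sub (intervalIntegrable_const) hihalf]
      have h1 : (∫ _t in (0:ℝ)..1, (1:ℝ)) = 1 := by simp
      rw [h1, ← fracKK, fracKK_half]
    rw [h0]
  rw [hL, hR]
  apply intervalIntegral.integral_mono_on (by norm_num)
    (hi1.sub hi2) ((intervalIntegrable_const.sub hihalf).const_mul _)
  intro t ht
  obtain ⟨hb0, hb1⟩ := frac_base_mem ht
  exact frac_pw hb0 hb1 hs h12 hs2

/-- The core polynomial inequality. -/
lemma frac_Tprime {x y : ℝ} (hx : 1/2 ≤ x) (hxy : x ≤ y) (hy : y ≤ 1) :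
    y*(1-y)*((2*x+1)*((x+1)*(x+2)))*(1+(33/50)*(y-x)) ≤
    x*(1-x)*((2*y+1)*((y+1)*(y+2)))*(1-(111/80)*(y-x)) := by
  have ha : (0:ℝ) ≤ x - 1/2 := by linarith
  have hb : (0:ℝ) ≤ y - x := by linarith
  have hc : (0:ℝ) ≤ 1/2 - (y-x) := by linarith
  have P : ∀ i j : ℕ, (0:ℝ) ≤ (x-1/2)^i * (y-x)^j :=
    fun i j => mul_nonneg (pow_nonneg ha i) (pow_nonneg hb j)
  have key : (0:ℝ) ≤ (y-x)^3 * (1/2 - (y-x)) := mul_nonneg (pow_nonneg hb 3) hc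
  linarith [P 0 1, P 0 2, P 0 3, P 0 4, P 1 1, P 1 2, P 1 3, P 2 1, P 2 2, P 2 3, P 2 4,
    P 3 1, P 3 2, P 3 3, P 4 1, P 4 2, P 5 1, key]

lemma frac_four_rpow_half (α : ℝ) : (4:ℝ) ^ (α/2) = 2^α := by
  rw [show (4:ℝ) = 2^(2:ℕ) by norm_num, ← Real.rpow_natCast 2 2, ← Real.rpow_mul (by norm_num)]
  congr 1
  ring

/-! ### Identities for `fracCoeff` -/

lemma fracCoeff_neg (α : ℝ) (k : ℤ) : fracCoeff α (-k) = fracCoeff α k := by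
  rw [fracCoeff, fracCoeff]
  have hsign : ((-1:ℝ))^(-k) = (-1)^k := by
    rcases Int.even_or_odd k with h | h
    · rw [h.neg.neg_one_zpow, h.neg_one_zpow]
    · rw [(h.neg).neg_one_zpow, h.neg_one_zpow]
  push_cast
  rw [hsign, show α/2 - -(k:ℝ) + 1 = α/2 + k + 1 by ring,
    show α/2 + -(k:ℝ) + 1 = α/2 - k + 1 by ring,
    mul_comm (Gamma (α/2 + (k:ℝ) + 1)) (Gamma (α/2 - (k:ℝ) + 1))]

lemma frac_g0_eq {α : ℝ} (h1 : 1 ≤ α) (h2 : α ≤ 2) :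
    fracCoeff α 0 = 2^α / ((α+1) * fracKK (α/2)) := by
  have hA : 0 < Gamma (α+1) := Gamma_pos_of_pos (by linarith)
  have hB : 0 < Gamma (α/2+1) := Gamma_pos_of_pos (by linarith)
  have hKK : fracKK (α/2) = 2^α * (Gamma (α/2+1) * Gamma (α/2+1) / ((α+1) * Gamma (α+1))) := by
    rw [fracKK_eq (by linarith), frac_four_rpow_half,
      show (α/2+1)+(α/2+1) = (α+1)+1 by ring, Real.Gamma_add_one (by linarith : α+1 ≠ 0)]
  have h2pow : (0:ℝ) < 2^α := Real.rpow_pos_of_pos (by norm_num) _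
  rw [fracCoeff, hKK]
  push_cast
  rw [show α/2 - 0 + 1 = α/2+1 by ring, show α/2 + 0 + 1 = α/2+1 by ring, zpow_zero]
  field_simp

lemma frac_g0_pos {α : ℝ} (h1 : 1 ≤ α) (h2 : α ≤ 2) : 0 < fracCoeff α 0 := by
  rw [frac_g0_eq h1 h2]
  have := fracKK_pos (by linarith : (0:ℝ) < α/2) (by linarith : α/2 ≤ 1)
  have h2pow : (0:ℝ) < 2^α := Real.rpow_pos_of_pos (by norm_num) _
  positivity

lemma frac_g1_eq {α : ℝ} (h1 : 1 ≤ α) (h2 : α ≤ 2) :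
    fracCoeff α 1 = -(fracCoeff α 0 * ((α/2) / (α/2+1))) := by
  have hB : 0 < Gamma (α/2) := Gamma_pos_of_pos (by linarith)
  rw [fracCoeff, fracCoeff]
  push_cast
  rw [show α/2 - 1 + 1 = α/2 by ring, show α/2 + 1 + 1 = (α/2+1)+1 by ring,
    show α/2 - 0 + 1 = (α/2)+1 by ring, show α/2 + 0 + 1 = (α/2)+1 by ring,
    Real.Gamma_add_one (by positivity : (α/2+1:ℝ) ≠ 0),
    Real.Gamma_add_one (by positivity : (α/2:ℝ) ≠ 0), zpow_zero, zpow_one]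
  field_simp

lemma frac_g2_eq {α : ℝ} (h1 : 1 ≤ α) (h2 : α < 2) :
    fracCoeff α 2 = fracCoeff α 0 * ((α/2)*(α/2-1)/((α/2+1)*(α/2+2))) := by
  have hc : α/2 - 1 ≠ 0 := by
    intro h
    have : α = 2 := by linarith [sub_eq_zero.mp h]
    linarith
  have hm : Gamma (α/2) ≠ 0 := (Gamma_pos_of_pos (by linarith)).ne'
  have hm1 : Gamma (α/2-1) ≠ 0 := by
    intro h
    apply hm
    rw [show α/2 = (α/2-1)+1 by ring, Real.Gamma_add_one hc, h, mul_zero]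
  have e0 : (α:ℝ)/2 ≠ 0 := by positivity
  have e1 : (α:ℝ)/2+1 ≠ 0 := by positivity
  have e2 : (α:ℝ)/2+2 ≠ 0 := by positivity
  have hGhalf : Gamma (α/2) = (α/2-1) * Gamma (α/2-1) := by
    have h := Real.Gamma_add_one hc
    rwa [show α/2-1+1 = α/2 by ring] at h
  have hG1 : Gamma (α/2+1) = (α/2)*((α/2-1)*Gamma (α/2-1)) := by
    rw [Real.Gamma_add_one e0, hGhalf]
  have hG3 : Gamma (α/2+2+1) = (α/2+2)*((α/2+1)*((α/2)*((α/2-1)*Gamma (α/2-1)))) := by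
    rw [show α/2+2+1 = (α/2+2)+1 by ring, Real.Gamma_add_one e2,
      show α/2+2 = (α/2+1)+1 by ring, Real.Gamma_add_one e1, hG1]
  rw [fracCoeff, fracCoeff]
  push_cast
  rw [show α/2 - 2 + 1 = α/2-1 by ring,
    show α/2 - 0 + 1 = α/2+1 by ring, show α/2 + 0 + 1 = α/2+1 by ring,
    show α/2 + 2 + 1 = α/2+2+1 by ring, hG3, hG1]
  rw [zpow_zero, show ((-1:ℝ))^(2:ℤ) = 1 by norm_num]
  rw [div_mul_div_comm, div_eq_div_iff (by positivity) (by positivity)]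
  ring

lemma frac_rec {α : ℝ} (h1 : 1 ≤ α) (h2 : α ≤ 2) (n : ℕ) (hn : 2 ≤ n) :
    fracCoeff α ((n:ℤ)+1) = fracCoeff α (n:ℤ) * (((n:ℝ) - α/2) / ((n:ℝ)+1+α/2)) := by
  have hn' : (2:ℝ) ≤ (n:ℝ) := by exact_mod_cast hn
  have hc : α/2 - (n:ℝ) ≠ 0 := by intro h; nlinarith [sub_eq_zero.mp h]
  have hd : (0:ℝ) < α/2 + ((n:ℝ)+1) := by linarith
  have hΓn : Gamma (α/2 + (n:ℝ) + 1) ≠ 0 := (Gamma_pos_of_pos (by linarith)).ne'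
  rcases eq_or_ne (Gamma (α/2 - (n:ℝ))) 0 with h0 | h0
  · rw [fracCoeff, fracCoeff]
    push_cast
    rw [show α/2 - ((n:ℝ)+1) + 1 = α/2 - n by ring, h0,
      show α/2 - (n:ℝ) + 1 = (α/2 - n) + 1 by ring, Real.Gamma_add_one hc, h0]
    simp
  · rw [fracCoeff, fracCoeff]
    push_cast
    rw [show α/2 - ((n:ℝ)+1) + 1 = α/2 - n by ring,
        show α/2 + ((n:ℝ)+1) + 1 = (α/2 + n + 1) + 1 by ring,
        Real.Gamma_add_one (by linarith : α/2 + (n:ℝ) + 1 ≠ 0),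
        show α/2 - (n:ℝ) + 1 = (α/2 - n) + 1 by ring, Real.Gamma_add_one hc,
        zpow_add_one₀ (by norm_num : (-1:ℝ) ≠ 0)]
    rw [div_mul_div_comm, div_eq_div_iff
      (mul_ne_zero h0 (mul_ne_zero (by linarith : α/2 + (n:ℝ) + 1 ≠ 0) hΓn))
      (mul_ne_zero (mul_ne_zero (mul_ne_zero hc h0) hΓn)
        (by linarith : (n:ℝ)+1+α/2 ≠ 0))]
    ring

/-! ### Monotonicity facts -/

lemma frac_g0_mono {α₁ α₂ : ℝ} (h1 : 1 ≤ α₁) (h12 : α₁ < α₂) (h2 : α₂ ≤ 2) :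
    fracCoeff α₁ 0 < fracCoeff α₂ 0 := by
  rw [frac_g0_eq h1 (by linarith), frac_g0_eq (by linarith) h2]
  have hK1 : 0 < fracKK (α₁/2) := fracKK_pos (by linarith) (by linarith)
  have hK2 : 0 < fracKK (α₂/2) := fracKK_pos (by linarith) (by linarith)
  have hKm : fracKK (α₂/2) ≤ fracKK (α₁/2) := fracKK_mono (by linarith) (by linarith)
  have h2p1 : (0:ℝ) < 2^α₁ := Real.rpow_pos_of_pos (by norm_num) _
  have h2p2 : (0:ℝ) < 2^α₂ := Real.rpow_pos_of_pos (by norm_num) _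
  rw [div_lt_div_iff₀ (mul_pos (by linarith : (0:ℝ) < α₁+1) hK1)
    (mul_pos (by linarith : (0:ℝ) < α₂+1) hK2)]
  have hkey : (α₂+1) < 2^(α₂-α₁) * (α₁+1) := by
    have hexp : (2:ℝ)^(α₂-α₁) = Real.exp (Real.log 2 * (α₂-α₁)) :=
      Real.rpow_def_of_pos (by norm_num) _
    have hl2' : 0 < Real.log 2 := Real.log_pos (by norm_num)
    have hne : Real.log 2 * (α₂-α₁) ≠ 0 :=
      (mul_pos hl2' (by linarith : (0:ℝ) < α₂-α₁)).ne'
    have hlt := Real.add_one_lt_exp hne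
    have hl2 := Real.log_two_gt_d9
    rw [hexp]
    nlinarith [mul_lt_mul_of_pos_right hlt (show (0:ℝ) < α₁+1 by linarith),
      mul_nonneg (mul_nonneg (show (0:ℝ) ≤ α₂-α₁ by linarith) hl2'.le)
        (show (0:ℝ) ≤ α₁-1 by linarith),
      mul_nonneg (show (0:ℝ) ≤ α₂-α₁ by linarith)
        (show (0:ℝ) ≤ 2*Real.log 2 - 1 by nlinarith [hl2])]
  have hsplit : (2:ℝ)^α₂ = 2^α₁ * 2^(α₂-α₁) := by
    rw [← Real.rpow_add (by norm_num)]; ring_nf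
  calc 2^α₁ * ((α₂+1) * fracKK (α₂/2))
      ≤ 2^α₁ * ((α₂+1) * fracKK (α₁/2)) := by
        apply mul_le_mul_of_nonneg_left (mul_le_mul_of_nonneg_left hKm (by linarith)) h2p1.le
    _ < 2^α₁ * ((2^(α₂-α₁) * (α₁+1)) * fracKK (α₁/2)) := by
        apply mul_lt_mul_of_pos_left (mul_lt_mul_of_pos_right hkey hK1) h2p1
    _ = 2^α₂ * ((α₁+1) * fracKK (α₁/2)) := by rw [hsplit]; ring

/-- The function `W`. -/
noncomputable def fracW (β : ℝ) : ℝ := β*(1-β)/((2*β+1)*((β+1)*(β+2)))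

lemma fracW_pos {β : ℝ} (h0 : 0 < β) (h1 : β < 1) : 0 < fracW β := by
  rw [fracW]
  have : 0 < 1 - β := by linarith
  positivity

lemma frac_Tdiv {x y : ℝ} (hx : 1/2 ≤ x) (hxy : x ≤ y) (hy : y ≤ 1) :
    fracW y * (1+(33/50)*(y-x)) ≤ fracW x * (1-(111/80)*(y-x)) := by
  have hDx : (0:ℝ) < (2*x+1)*((x+1)*(x+2)) := by
    apply mul_pos (by linarith) (mul_pos (by linarith) (by linarith))
  have hDy : (0:ℝ) < (2*y+1)*((y+1)*(y+2)) := by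
    apply mul_pos (by linarith) (mul_pos (by linarith) (by linarith))
  rw [fracW, fracW]
  simp only [div_mul_eq_mul_div]
  rw [div_le_div_iff₀ hDy hDx]
  nlinarith [frac_Tprime hx hxy hy]

lemma frac_g2_formula {α : ℝ} (h1 : 1 ≤ α) (h2 : α < 2) :
    fracCoeff α 2 = -(2^α * fracW (α/2) / fracKK (α/2)) := by
  rw [frac_g2_eq h1 h2, frac_g0_eq h1 h2.le, fracW]
  have hK : fracKK (α/2) ≠ 0 := (fracKK_pos (by linarith) (by linarith)).ne'
  have e1 : (α:ℝ)+1 ≠ 0 := by positivity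
  have e2 : (α:ℝ)/2+1 ≠ 0 := by positivity
  have e3 : (α:ℝ)/2+2 ≠ 0 := by positivity
  have e4 : 2*(α/2)+1 ≠ 0 := by positivity
  have e5 : (α:ℝ)/2+1+1 ≠ 0 := by positivity
  field_simp
  ring

lemma frac_exp_bound {d : ℝ} (hd0 : 0 ≤ d) :
    (2:ℝ)^(2*d) * (1-(111/80)*d) ≤ 1 := by
  have hexp : (2:ℝ)^(2*d) = Real.exp (Real.log 2 * (2*d)) :=
    Real.rpow_def_of_pos (by norm_num) _
  have h1 : 1 - Real.log 2 * (2*d) ≤ Real.exp (-(Real.log 2 * (2*d))) := by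
    have := Real.add_one_le_exp (-(Real.log 2 * (2*d)))
    linarith
  have h2 : Real.exp (-(Real.log 2 * (2*d))) * Real.exp (Real.log 2 * (2*d)) = 1 := by
    rw [← Real.exp_add]; simp
  have hl2 : Real.log 2 < 0.6931471808 := Real.log_two_lt_d9
  have hl2' : 0 < Real.log 2 := Real.log_pos (by norm_num)
  have hepos : 0 < Real.exp (Real.log 2 * (2*d)) := Real.exp_pos _
  rw [hexp]
  have h3 := mul_le_mul_of_nonneg_right h1 hepos.le
  rw [h2] at h3
  nlinarith [h3, mul_nonneg (mul_nonneg hepos.le hd0)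
    (show (0:ℝ) ≤ 111/80 - 2*Real.log 2 by linarith)]

lemma frac_g2_strict {α₁ α₂ : ℝ} (h1 : 1 ≤ α₁) (h12 : α₁ < α₂) (h2 : α₂ < 2) :
    fracCoeff α₁ 2 < fracCoeff α₂ 2 := by
  set x := α₁/2 with hxdef
  set y := α₂/2 with hydef
  have hx : 1/2 ≤ x := by rw [hxdef]; linarith
  have hxy : x < y := by rw [hxdef, hydef]; linarith
  have hy : y < 1 := by rw [hydef]; linarith
  set d : ℝ := y - x with hddef
  have hd0 : 0 < d := by simp [hddef]; linarith
  have hK1 : 0 < fracKK x := fracKK_pos (by linarith) (by linarith)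
  have hK2 : 0 < fracKK y := fracKK_pos (by linarith) (by linarith)
  have hW1 : 0 < fracW x := fracW_pos (by linarith) (by linarith)
  have hW2 : 0 < fracW y := fracW_pos (by linarith) (by linarith)
  have h2p1 : (0:ℝ) < 2^α₁ := Real.rpow_pos_of_pos (by norm_num) _
  have h2p2 : (0:ℝ) < 2^α₂ := Real.rpow_pos_of_pos (by norm_num) _
  rw [frac_g2_formula h1 (by linarith), frac_g2_formula (by linarith) h2, neg_lt_neg_iff,
    div_lt_div_iff₀ hK2 hK1]
  -- goal : 2^α₂ * fracW y * fracKK x < 2^α₁ * fracW x * fracKK y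
  have hKb : fracKK x ≤ fracKK y * (1 + (3-3*π/4)*d) := by
    have hkey := fracKK_key hx hxy.le hy.le
    have hge := fracKK_ge (by linarith : (0:ℝ) < y) (by linarith : y ≤ 1)
    have hπ : 1 - π/4 ≥ 0 := by linarith [pi_le_four]
    nlinarith [hkey, hge, hπ, hd0, mul_nonneg (mul_nonneg hd0.le hπ)
      (show (0:ℝ) ≤ fracKK y - 2/3 by linarith [hge])]
  have hc1 : (3-3*π/4) < 33/50 := by nlinarith [pi_gt_d6]
  have hT := frac_Tdiv hx hxy.le hy.le
  have hEB := frac_exp_bound hd0.le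
  have hsplit : (2:ℝ)^α₂ = 2^α₁ * 2^(2*d) := by
    rw [← Real.rpow_add (by norm_num)]
    congr 1
    rw [hddef, hxdef, hydef]; ring
  have h2pd : (0:ℝ) < 2^(2*d) := Real.rpow_pos_of_pos (by norm_num) _
  calc 2^α₂ * fracW y * fracKK x
      ≤ 2^α₂ * fracW y * (fracKK y * (1 + (3-3*π/4)*d)) := by
        apply mul_le_mul_of_nonneg_left hKb (by positivity)
    _ < 2^α₂ * fracW y * (fracKK y * (1 + (33/50)*d)) := by
        apply mul_lt_mul_of_pos_left _ (by positivity)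
        apply mul_lt_mul_of_pos_left _ hK2
        nlinarith [hc1, hd0]
    _ = (2^α₂ * fracKK y) * (fracW y * (1 + (33/50)*(y-x))) := by rw [hddef]; ring
    _ ≤ (2^α₂ * fracKK y) * (fracW x * (1-(111/80)*(y-x))) := by
        apply mul_le_mul_of_nonneg_left hT (by positivity)
    _ = (2^(2*d) * (1-(111/80)*d)) * (2^α₁ * fracW x * fracKK y) := by
        rw [hsplit, hddef]; ring
    _ ≤ 1 * (2^α₁ * fracW x * fracKK y) := by
        apply mul_le_mul_of_nonneg_right hEB (by positivity)
    _ = 2^α₁ * fracW x * fracKK y := one_mul _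

lemma frac_g_at_two (n : ℕ) (hn : 2 ≤ n) : fracCoeff 2 (n:ℤ) = 0 := by
  have harg : (2:ℝ)/2 - (n:ℝ) + 1 = -((n-2:ℕ):ℝ) := by
    rw [Nat.cast_sub hn]
    push_cast
    ring
  rw [fracCoeff]
  push_cast
  rw [show (2:ℝ)/2 - (n:ℝ) + 1 = -((n-2:ℕ):ℝ) from harg, Real.Gamma_neg_nat_eq_zero,
    zero_mul, div_zero]

lemma frac_strict (n : ℕ) (hn : 2 ≤ n) :
    ∀ α₁ α₂ : ℝ, 1 ≤ α₁ → α₁ < α₂ → α₂ ≤ 2 →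
      fracCoeff α₁ (n:ℤ) < fracCoeff α₂ (n:ℤ) ∧ fracCoeff α₂ (n:ℤ) ≤ 0 := by
  induction n, hn using Nat.le_induction with
  | base =>
      intro α₁ α₂ h1 h12 h2
      have hneg : ∀ α : ℝ, 1 ≤ α → α < 2 → fracCoeff α 2 < 0 := by
        intro α ha1 ha2
        rw [frac_g2_eq ha1 ha2]
        have hg0 := frac_g0_pos ha1 ha2.le
        have hfac : (α/2)*(α/2-1)/((α/2+1)*(α/2+2)) < 0 := by
          apply div_neg_of_neg_of_pos
          · nlinarith
          · nlinarith
        exact mul_neg_of_pos_of_neg hg0 hfac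
      rcases eq_or_lt_of_le h2 with heq | hlt
      · constructor
        · rw [heq, show ((2:ℕ):ℤ) = (2:ℤ) by norm_num]
          rw [show fracCoeff 2 2 = 0 from frac_g_at_two 2 le_rfl]
          exact hneg α₁ h1 (by linarith)
        · rw [heq, show ((2:ℕ):ℤ) = (2:ℤ) by norm_num,
            show fracCoeff 2 2 = 0 from frac_g_at_two 2 le_rfl]
      · constructor
        · exact_mod_cast frac_g2_strict h1 h12 hlt
        · exact_mod_cast (hneg α₂ (by linarith) hlt).le
  | succ n hn2 ih =>
      intro α₁ α₂ h1 h12 h2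
      obtain ⟨hlt, hle⟩ := ih α₁ α₂ h1 h12 h2
      have hr1 := frac_rec h1 (by linarith) n hn2
      have hr2 := frac_rec (by linarith : 1 ≤ α₂) h2 n hn2
      have hn' : (2:ℝ) ≤ (n:ℝ) := by exact_mod_cast hn2
      have hc1pos : (0:ℝ) < ((n:ℝ) - α₁/2) / ((n:ℝ)+1+α₁/2) := by
        apply div_pos <;> linarith
      have hc2pos : (0:ℝ) < ((n:ℝ) - α₂/2) / ((n:ℝ)+1+α₂/2) := by
        apply div_pos <;> linarith
      have hcm : ((n:ℝ) - α₂/2) / ((n:ℝ)+1+α₂/2) ≤ ((n:ℝ) - α₁/2) / ((n:ℝ)+1+α₁/2) := by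
        rw [div_le_div_iff₀ (by linarith) (by linarith)]
        nlinarith
      push_cast
      push_cast at hr1 hr2
      rw [hr1, hr2]
      constructor
      · calc fracCoeff α₁ (n:ℤ) * (((n:ℝ) - α₁/2) / ((n:ℝ)+1+α₁/2))
            ≤ fracCoeff α₁ (n:ℤ) * (((n:ℝ) - α₂/2) / ((n:ℝ)+1+α₂/2)) := by
              apply mul_le_mul_of_nonpos_left hcm
              linarith
          _ < fracCoeff α₂ (n:ℤ) * (((n:ℝ) - α₂/2) / ((n:ℝ)+1+α₂/2)) :=
              mul_lt_mul_of_pos_right hlt hc2pos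
      · exact mul_nonpos_of_nonpos_of_nonneg hle hc2pos.le

/-- On `[1,2]` the extension agrees with the Gamma-quotient formula. -/
lemma fracCoeffExt_eq {α : ℝ} (h1 : 1 ≤ α) (h2 : α ≤ 2) (k : ℤ) :
    fracCoeffExt α k = fracCoeff α k := by
  rcases eq_or_lt_of_le h2 with heq | hlt
  · subst heq
    rw [fracCoeffExt, if_pos rfl]
    have hval : ∀ m : ℤ, 0 ≤ m → (if m = 0 then (2:ℝ) else if |m| = 1 then -1 else 0)
        = fracCoeff 2 m := by
      intro m hm
      lift m to ℕ using hm with n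
      match n with
      | 0 =>
          rw [if_pos (show ((0:ℕ):ℤ) = 0 by norm_num), fracCoeff]
          push_cast
          rw [show (2:ℝ)/2 - 0 + 1 = 2 by norm_num, show (2:ℝ)/2 + 0 + 1 = 2 by norm_num,
            show (2:ℝ)+1 = 3 by norm_num, frac_Gamma_two, frac_Gamma_three, zpow_zero]
          norm_num
      | 1 =>
          rw [if_neg (show ¬((1:ℕ):ℤ) = 0 by norm_num),
            if_pos (show |((1:ℕ):ℤ)| = 1 by norm_num), fracCoeff]
          push_cast
          rw [show (2:ℝ)/2 - 1 + 1 = 1 by norm_num, show (2:ℝ)/2 + 1 + 1 = 3 by norm_num,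
            show (2:ℝ)+1 = 3 by norm_num, Real.Gamma_one, frac_Gamma_three, zpow_one]
          norm_num
      | (n+2) =>
          rw [if_neg (by omega), if_neg (by
            rw [abs_of_nonneg (by positivity)]; omega),
            frac_g_at_two (n+2) (by omega)]
    rcases le_or_gt 0 k with hk | hk
    · exact hval k hk
    · rw [← fracCoeff_neg, ← hval (-k) (by omega)]
      have h0 : ¬ k = 0 := by omega
      have h0' : ¬ (-k) = 0 := by omega
      rw [if_neg h0, if_neg h0', abs_neg]
  · rw [fracCoeffExt, if_neg (by linarith)]

end Aux

theorem fracCoeff_strict_mono_in_order (α₁ α₂ : ℝ) (h1 : 1 ≤ α₁) (h12 : α₁ < α₂)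
    (h2 : α₂ ≤ 2) (k : ℤ) :
    (|k| ≠ 1 → fracCoeffExt α₁ k < fracCoeffExt α₂ k) ∧
    (|k| = 1 → fracCoeffExt α₂ k < fracCoeffExt α₁ k) := by
  rw [fracCoeffExt_eq h1 (by linarith) k, fracCoeffExt_eq (by linarith) h2 k]
  constructor
  · intro hk
    rcases eq_or_ne k 0 with rfl | hk0
    · exact frac_g0_mono h1 h12 h2
    · -- |k| ≥ 2
      rw [Int.abs_eq_natAbs] at hk
      have hk2 : 2 ≤ k.natAbs := by omega
      have hred : ∀ α : ℝ, fracCoeff α k = fracCoeff α (k.natAbs : ℤ) := by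
        intro α
        rcases le_or_gt 0 k with h | h
        · rw [Int.natAbs_of_nonneg h]
        · rw [show (k.natAbs : ℤ) = -k by omega, fracCoeff_neg]
      rw [hred α₁, hred α₂]
      exact (frac_strict k.natAbs hk2 α₁ α₂ h1 h12 h2).1
  · intro hk
    have hred : ∀ α : ℝ, fracCoeff α k = fracCoeff α 1 := by
      intro α
      rcases abs_eq (by norm_num : (0:ℤ) ≤ 1) |>.mp hk with h | h
      · rw [h]
      · rw [h, show (-1 : ℤ) = -(1:ℤ) by norm_num, fracCoeff_neg]
    rw [hred α₁, hred α₂]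
    rw [frac_g1_eq h1 (by linarith), frac_g1_eq (by linarith) h2]
    rw [neg_lt_neg_iff]
    have hg0m := frac_g0_mono h1 h12 h2
    have hg01 := frac_g0_pos h1 (by linarith)
    have hg02 := frac_g0_pos (by linarith : 1 ≤ α₂) h2
    have hr1pos : (0:ℝ) < (α₁/2) / (α₁/2+1) := by apply div_pos <;> linarith
    have hrm : (α₁/2) / (α₁/2+1) < (α₂/2) / (α₂/2+1) := by
      rw [div_lt_div_iff₀ (by linarith) (by linarith)]
      nlinarith
    calc fracCoeff α₁ 0 * ((α₁/2) / (α₁/2+1))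
        < fracCoeff α₂ 0 * ((α₁/2) / (α₁/2+1)) := mul_lt_mul_of_pos_right hg0m hr1pos
      _ < fracCoeff α₂ 0 * ((α₂/2) / (α₂/2+1)) := mul_lt_mul_of_pos_left hrm hg02
end
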